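/- Let m, ω : ℝ → ℝ³ be twice and once differentiable respectively, with ‖m(t)‖ = 1, ⟨ω(t), m(t)⟩ = 0, ω(t) ≠ 0, and m'(t) = ω(t) × m(t) for all t. Then ‖m'(t)‖ = ‖ω(t)‖ and the geodesic curvature satisfies ⟨m''(t), m(t) × m'(t)⟩ / ‖m'(t)‖³ = −⟨ω'(t), ω(t) × m(t)⟩ / ‖ω(t)‖³. -/

import Mathlib

open scoped RealInnerProductSpace

noncomputable section

/-- The cross product on `ℝ³` (modelled as `EuclideanSpace ℝ (Fin 3)`). -/
def cross (a b : EuclideanSpace ℝ (Fin 3)) : EuclideanSpace ℝ (Fin 3) :=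
  WithLp.toLp 2 ![a 1 * b 2 - a 2 * b 1, a 2 * b 0 - a 0 * b 2, a 0 * b 1 - a 1 * b 0]

lemma aux_inner3 (x y : EuclideanSpace ℝ (Fin 3)) :
    ⟪x, y⟫ = x 0 * y 0 + x 1 * y 1 + x 2 * y 2 := by
  simp [PiLp.inner_apply, Fin.sum_univ_three, RCLike.inner_apply]
  ring

lemma aux_normsq3 (x : EuclideanSpace ℝ (Fin 3)) :
    ‖x‖ ^ 2 = x 0 ^ 2 + x 1 ^ 2 + x 2 ^ 2 := by
  rw [← real_inner_self_eq_norm_sq, aux_inner3]; ring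

/-- For a twice differentiable curve `m` on the unit sphere with `m' = ω × m`, where
`ω ⊥ m` and `ω ≠ 0`, one has `‖m'‖ = ‖ω‖` and the geodesic curvature identity
`⟨m'', m × m'⟩ / ‖m'‖³ = −⟨ω', ω × m⟩ / ‖ω‖³`. -/
theorem geodesic_curvature_from_angular_velocity
    (m m' m'' ω ω' : ℝ → EuclideanSpace ℝ (Fin 3))
    (hm' : ∀ t : ℝ, HasDerivAt m (m' t) t)
    (hm'' : ∀ t : ℝ, HasDerivAt m' (m'' t) t)
    (hω' : ∀ t : ℝ, HasDerivAt ω (ω' t) t)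
    (hunit : ∀ t : ℝ, ‖m t‖ = 1)
    (horth : ∀ t : ℝ, ⟪ω t, m t⟫ = 0)
    (hne : ∀ t : ℝ, ω t ≠ 0)
    (hode : ∀ t : ℝ, m' t = cross (ω t) (m t)) :
    ∀ t : ℝ, ‖m' t‖ = ‖ω t‖ ∧
      ⟪m'' t, cross (m t) (m' t)⟫ / ‖m' t‖ ^ 3 =
        -⟪ω' t, cross (ω t) (m t)⟫ / ‖ω t‖ ^ 3 := by
  intro t
  have hb : (m t 0) ^ 2 + (m t 1) ^ 2 + (m t 2) ^ 2 = 1 := by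
    have := aux_normsq3 (m t); rw [hunit t] at this; linarith
  have hab : ω t 0 * m t 0 + ω t 1 * m t 1 + ω t 2 * m t 2 = 0 := by
    have := horth t; rwa [aux_inner3] at this
  -- norm equality
  have hsq : ‖m' t‖ ^ 2 = ‖ω t‖ ^ 2 := by
    rw [aux_normsq3, aux_normsq3, hode]
    simp only [cross, WithLp.ofLp_toLp, Matrix.cons_val_zero, Matrix.cons_val_one, Matrix.head_cons,
      Matrix.cons_val_two, Matrix.tail_cons]
    linear_combination (ω t 0 ^ 2 + ω t 1 ^ 2 + ω t 2 ^ 2) * hb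
      - (ω t 0 * m t 0 + ω t 1 * m t 1 + ω t 2 * m t 2) * hab
  have hnorm : ‖m' t‖ = ‖ω t‖ := by
    have := congrArg Real.sqrt hsq
    rwa [Real.sqrt_sq (norm_nonneg _), Real.sqrt_sq (norm_nonneg _)] at this
  refine ⟨hnorm, ?_⟩
  -- m × m' = ω
  have hcross : cross (m t) (m' t) = ω t := by
    rw [hode]
    ext i
    fin_cases i <;>
      simp [cross, Fin.isValue, Matrix.cons_val_zero, Matrix.cons_val_one, Matrix.head_cons,
        Matrix.cons_val_two, Matrix.tail_cons]
    · linear_combination ω t 0 * hb - m t 0 * hab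
    · linear_combination ω t 1 * hb - m t 1 * hab
    · linear_combination ω t 2 * hb - m t 2 * hab
  -- ⟪m', ω⟫ ≡ 0
  have hz : ∀ s : ℝ, ⟪m' s, ω s⟫ = (0 : ℝ) := by
    intro s
    rw [hode, aux_inner3]
    simp only [cross, WithLp.ofLp_toLp, Matrix.cons_val_zero, Matrix.cons_val_one, Matrix.head_cons,
      Matrix.cons_val_two, Matrix.tail_cons]
    ring
  have hdz : HasDerivAt (fun s => ⟪m' s, ω s⟫) (⟪m' t, ω' t⟫ + ⟪m'' t, ω t⟫) t :=
    (hm'' t).inner ℝ (hω' t)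
  have hdz0 : HasDerivAt (fun s => ⟪m' s, ω s⟫) (0 : ℝ) t := by
    simpa [hz] using hasDerivAt_const t (0 : ℝ)
  have hkey : ⟪m' t, ω' t⟫ + ⟪m'' t, ω t⟫ = 0 := hdz.unique hdz0
  rw [hcross, hnorm]
  have hsymm : ⟪m' t, ω' t⟫ = ⟪ω' t, cross (ω t) (m t)⟫ := by
    rw [hode]; exact real_inner_comm _ _
  have : ⟪m'' t, ω t⟫ = -⟪ω' t, cross (ω t) (m t)⟫ := by linarith [hsymm, hkey]
  rw [this, neg_div]
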